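/- Let a < b be real numbers and let f : [0,∞) → ℝ be continuous with a ≤ f(0) ≤ b. Then there exists a unique pair (L, U) of continuous nondecreasing functions on [0,∞) with L(0) = U(0) = 0 such that: (i) Z(t) := f(t) + L(t) − U(t) ∈ [a, b] for all t ≥ 0; (ii) the Lebesgue–Stieltjes measure dL is carried by {t : Z(t) = a}, i.e. ∫_0^T 1_{Z(s) ≠ a} dL(s) = 0 for all T; and (iii) the Lebesgue–Stieltjes measure dU is carried by {t : Z(t) = b}, i.e. ∫_0^T 1_{Z(s) ≠ b} dU(s) = 0 for all T. -/

import Mathlib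

open MeasureTheory

/-- The Lebesgue–Stieltjes measure associated with a monotone continuous function. -/
noncomputable def lsMeasure (L : ℝ → ℝ) (hm : Monotone L) (hc : Continuous L) :
    Measure ℝ :=
  StieltjesFunction.measure ⟨L, hm, fun x => (hc.continuousAt).continuousWithinAt⟩

/-- A pair `(L, U)` solving the two-sided Skorokhod reflection problem on `[a, b]`
for the driving path `f`: both are continuous, nondecreasing, vanish at `0`,
the reflected path `Z = f + L − U` stays in `[a, b]` on `[0, ∞)`, and the
Lebesgue–Stieltjes measures `dL` and `dU` are carried by `{Z = a}` and `{Z = b}`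
respectively (i.e. `∫_0^T 1_{Z ≠ a} dL = 0` and `∫_0^T 1_{Z ≠ b} dU = 0` for all `T`). -/
def IsSkorokhodPair (a b : ℝ) (f L U : ℝ → ℝ) : Prop :=
  Continuous L ∧ Continuous U ∧ Monotone L ∧ Monotone U ∧ L 0 = 0 ∧ U 0 = 0 ∧
  (∀ t, 0 ≤ t → f t + L t - U t ∈ Set.Icc a b) ∧
  (∀ (hm : Monotone L) (hc : Continuous L) (T : ℝ),
      lsMeasure L hm hc {s | s ∈ Set.Icc 0 T ∧ f s + L s - U s ≠ a} = 0) ∧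
  (∀ (hm : Monotone U) (hc : Continuous U) (T : ℝ),
      lsMeasure U hm hc {s | s ∈ Set.Icc 0 T ∧ f s + L s - U s ≠ b} = 0)

open MeasureTheory Set Filter Topology Function
open scoped Classical

namespace SkorokhodProof

section MeasureSec

lemma lsMeasure_Ioc (L : ℝ → ℝ) (hm : Monotone L) (hc : Continuous L) (u v : ℝ) :
    lsMeasure L hm hc (Ioc u v) = ENNReal.ofReal (L v - L u) :=
  StieltjesFunction.measure_Ioc _ _ _

lemma cont_leftLim (L : ℝ → ℝ) (hc : Continuous L) (x : ℝ) : leftLim L x = L x :=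
  leftLim_eq_of_tendsto
    ((hc.tendsto x).mono_left nhdsWithin_le_nhds)

lemma lsMeasure_Icc (L : ℝ → ℝ) (hm : Monotone L) (hc : Continuous L) (u v : ℝ) :
    lsMeasure L hm hc (Icc u v) = ENNReal.ofReal (L v - L u) := by
  rw [lsMeasure, StieltjesFunction.measure_Icc]
  have : leftLim (⇑(⟨L, hm, fun x => (hc.continuousAt).continuousWithinAt⟩ :
      StieltjesFunction ℝ)) u = L u := cont_leftLim L hc u
  rw [this]

lemma lsMeasure_singleton (L : ℝ → ℝ) (hm : Monotone L) (hc : Continuous L) (x : ℝ) :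
    lsMeasure L hm hc {x} = 0 := by
  rw [lsMeasure, StieltjesFunction.measure_singleton]
  have : leftLim (⇑(⟨L, hm, fun x => (hc.continuousAt).continuousWithinAt⟩ :
      StieltjesFunction ℝ)) x = L x := cont_leftLim L hc x
  rw [this]
  simp

lemma lsMeasure_regular (L : ℝ → ℝ) (hm : Monotone L) (hc : Continuous L) :
    (lsMeasure L hm hc).Regular := by
  rw [lsMeasure]; infer_instance

lemma null_on_open (L : ℝ → ℝ) (hm : Monotone L) (hc : Continuous L) (O : Set ℝ)
    (hO : IsOpen O) (hconst : ∀ u v : ℝ, u ≤ v → Icc u v ⊆ O → L u = L v) :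
    lsMeasure L hm hc O = 0 := by
  by_contra h0
  have hpos : 0 < lsMeasure L hm hc O := lt_of_le_of_ne zero_le (Ne.symm h0)
  obtain ⟨K, hKO, hKc, hKpos⟩ := (lsMeasure_regular L hm hc).innerRegular hO 0 hpos
  have hch : ∀ x : K, ∃ ε : ℝ, 0 < ε ∧ Icc ((x:ℝ) - ε) ((x:ℝ) + ε) ⊆ O := by
    rintro ⟨x, hx⟩
    obtain ⟨ε, hε, hball⟩ := Metric.isOpen_iff.1 hO x (hKO hx)
    refine ⟨ε/2, by linarith, fun y hy => hball ?_⟩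
    rw [Metric.mem_ball, Real.dist_eq, abs_sub_lt_iff]
    obtain ⟨h1, h2⟩ := hy
    constructor <;> linarith
  choose ε hε hsub using hch
  have hcover : K ⊆ ⋃ x : K, Ioo ((x:ℝ) - ε x) ((x:ℝ) + ε x) := by
    intro x hx
    have hco : ((⟨x, hx⟩ : K) : ℝ) = x := rfl
    refine mem_iUnion.2 ⟨⟨x, hx⟩, ?_⟩
    rw [mem_Ioo, hco]
    constructor <;> linarith [hε ⟨x, hx⟩]
  obtain ⟨t, ht⟩ := hKc.elim_finite_subcover _ (fun _ => isOpen_Ioo) hcover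
  have hnull : ∀ i : K, lsMeasure L hm hc (Ioo ((i:ℝ) - ε i) ((i:ℝ) + ε i)) = 0 := by
    intro i
    refine measure_mono_null Ioo_subset_Icc_self ?_
    rw [lsMeasure_Icc L hm hc, hconst _ _ (by linarith [hε i]) (hsub i)]
    simp
  have hK0 : lsMeasure L hm hc K = 0 := by
    refine measure_mono_null ht ?_
    refine le_antisymm (le_trans (measure_biUnion_finset_le t _) ?_) zero_le
    rw [Finset.sum_eq_zero fun i _ => hnull i]
  rw [hK0] at hKpos
  exact lt_irrefl 0 hKpos

lemma add_locallyFinite (μ ν : Measure ℝ) [IsLocallyFiniteMeasure μ]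
    [IsLocallyFiniteMeasure ν] : IsLocallyFiniteMeasure (μ + ν) := by
  refine ⟨fun x => ?_⟩
  obtain ⟨s1, hx1, ho1, hf1⟩ := μ.exists_isOpen_measure_lt_top x
  obtain ⟨s2, hx2, ho2, hf2⟩ := ν.exists_isOpen_measure_lt_top x
  refine ⟨s1 ∩ s2, (ho1.inter ho2).mem_nhds ⟨hx1, hx2⟩, ?_⟩
  rw [Measure.add_apply]
  exact ENNReal.add_lt_top.2 ⟨lt_of_le_of_lt (measure_mono inter_subset_left) hf1,
    lt_of_le_of_lt (measure_mono inter_subset_right) hf2⟩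

end MeasureSec

/-! ### One-sided reflection: running supremum -/

noncomputable def SL (g : ℝ → ℝ) (c t₀ t : ℝ) : ℝ :=
  sSup ((fun s => c - g s) '' Icc t₀ (max t t₀)) ⊔ 0

section SLsec
variable {g : ℝ → ℝ} {c t₀ : ℝ}

lemma Icc_max_ne (t₀ t : ℝ) : (Icc t₀ (max t t₀)).Nonempty := ⟨t₀, le_rfl, le_max_right _ _⟩

lemma SL_bdd (hg : Continuous g) (s t : ℝ) :
    BddAbove ((fun s => c - g s) '' Icc s t) :=
  isCompact_Icc.bddAbove_image ((continuous_const.sub hg).continuousOn)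

lemma SL_nonneg (g : ℝ → ℝ) (c t₀ t : ℝ) : 0 ≤ SL g c t₀ t := le_sup_right

lemma le_SL (hg : Continuous g) {s t : ℝ} (hs : t₀ ≤ s) (hst : s ≤ max t t₀) :
    c - g s ≤ SL g c t₀ t :=
  le_trans (le_csSup (SL_bdd hg _ _) ⟨s, ⟨hs, hst⟩, rfl⟩) le_sup_left

lemma SL_mono (hg : Continuous g) : Monotone (SL g c t₀) := by
  intro s t hst
  refine sup_le_sup_right (csSup_le_csSup (SL_bdd hg _ _) ((Icc_max_ne t₀ s).image _) ?_) 0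
  exact image_mono (Icc_subset_Icc le_rfl (max_le_max hst le_rfl))

lemma SL_left (t : ℝ) (ht : t ≤ t₀) : SL g c t₀ t = (c - g t₀) ⊔ 0 := by
  rw [SL, max_eq_right ht, Icc_self, image_singleton, csSup_singleton]

lemma SL_clamp (t : ℝ) : SL g c t₀ (max t t₀) = SL g c t₀ t := by
  rw [SL, SL, sup_assoc, sup_idem]

lemma SL_split (hg : Continuous g) {u v : ℝ} (hu : t₀ ≤ u) (huv : u ≤ v) :
    SL g c t₀ v = SL g c t₀ u ⊔ (sSup ((fun s => c - g s) '' Icc u v) ⊔ 0) := by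
  have h1 : Icc t₀ (max v t₀) = Icc t₀ (max u t₀) ∪ Icc u v := by
    rw [max_eq_left (hu.trans huv), max_eq_left hu]
    exact (Icc_union_Icc_eq_Icc hu huv).symm
  rw [SL, h1, image_union,
    csSup_union (SL_bdd hg _ _) ((Icc_max_ne t₀ u).image _) (SL_bdd hg _ _)
      ((nonempty_Icc.2 huv).image _), sup_sup_distrib_right]
  rfl

lemma W_ge (hg : Continuous g) {t : ℝ} (ht : t₀ ≤ t) : c ≤ g t + SL g c t₀ t := by
  have := le_SL (c := c) hg ht (le_max_left _ _)
  linarith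

lemma W_start (h : c ≤ g t₀) : g t₀ + SL g c t₀ t₀ = g t₀ := by
  rw [SL_left t₀ le_rfl, sup_eq_right.2 (by linarith)]; ring

lemma SL_cont (hg : Continuous g) : Continuous (SL g c t₀) := by
  rw [Metric.continuous_iff]
  intro x ε hε
  set p := max x t₀ with hp
  obtain ⟨δ, hδ, hδ'⟩ := Metric.continuousAt_iff.1 (hg.continuousAt (x := p)) (ε / 4) (by linarith)
  refine ⟨δ, hδ, fun y hy => ?_⟩
  set q := max y t₀ with hq
  have hqp : dist q p < δ := lt_of_le_of_lt (abs_max_sub_max_le_abs _ _ _) hy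
  have hbound : ∀ s r : ℝ, dist s p < δ → dist r p < δ → c - g s ≤ c - g r + ε / 2 := by
    intro s r hs hr
    have h1 := hδ' hs
    have h2 := hδ' hr
    rw [Real.dist_eq, abs_sub_lt_iff] at h1 h2
    linarith [h1.1, h1.2, h2.1, h2.2]
  have hmem : ∀ {u v : ℝ}, dist u p < δ → dist v p < δ → ∀ s ∈ Icc u v, dist s p < δ := by
    intro u v hu hv s hs
    rw [Real.dist_eq, abs_sub_lt_iff] at hu hv ⊢
    exact ⟨by linarith [hs.2, hv.1], by linarith [hs.1, hu.2]⟩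
  have main : ∀ u v : ℝ, u ≤ v → dist (max v t₀) p < δ → dist (max u t₀) p < δ →
      SL g c t₀ v ≤ SL g c t₀ u + ε / 2 := by
    intro u v huv hv hu
    have hsplit := SL_split (c := c) hg (le_max_right u t₀) (max_le_max huv (le_refl t₀))
    rw [SL_clamp, SL_clamp] at hsplit
    rw [hsplit]
    have hSnn := SL_nonneg g c t₀ u
    refine sup_le (by linarith) (sup_le ?_ (by linarith))
    refine csSup_le ((nonempty_Icc.2 (max_le_max huv (le_refl t₀))).image _) ?_
    rintro w ⟨s, hs, rfl⟩
    have hsd : dist s p < δ := hmem hu hv s hs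
    calc c - g s ≤ c - g (max u t₀) + ε / 2 := hbound s (max u t₀) hsd hu
      _ ≤ SL g c t₀ u + ε / 2 := by
          have := le_SL (c := c) hg (le_max_right u t₀) (le_refl (max u t₀))
          linarith
  have hxp : dist p p < δ := by simpa using hδ
  rcases le_total x y with hxy | hyx
  · have h1 := main x y hxy hqp hxp
    have h2 := SL_mono (c := c) (t₀ := t₀) hg hxy
    rw [Real.dist_eq, abs_sub_lt_iff]; constructor <;> linarith
  · have h1 := main y x hyx hxp hqp
    have h2 := SL_mono (c := c) (t₀ := t₀) hg hyx
    rw [Real.dist_eq, abs_sub_lt_iff]; constructor <;> linarith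

/-- If `SL` strictly increases on `[u,v]` then the reflected path touches the barrier in `(u,v]`. -/
lemma SL_touch (hg : Continuous g) {u v : ℝ} (hu : t₀ ≤ u) (huv : u ≤ v)
    (hlt : SL g c t₀ u < SL g c t₀ v) :
    ∃ s, u < s ∧ s ≤ v ∧ g s + SL g c t₀ s = c := by
  obtain ⟨s, hs, hmax⟩ := isCompact_Icc.exists_isMaxOn (nonempty_Icc.2 huv)
    ((continuous_const.sub hg).continuousOn (s := Icc u v))
  have hsup : sSup ((fun s => c - g s) '' Icc u v) = c - g s := by
    refine le_antisymm (csSup_le ((nonempty_Icc.2 huv).image _) ?_)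
      (le_csSup (SL_bdd hg _ _) ⟨s, hs, rfl⟩)
    rintro w ⟨r, hr, rfl⟩; exact hmax hr
  have hsplit := SL_split (c := c) hg hu huv
  rw [hsup] at hsplit
  have hSnn := SL_nonneg g c t₀ u
  have hveq : SL g c t₀ v = c - g s := by
    rcases le_total (c - g s) 0 with h | h
    · rw [sup_eq_right.2 h, sup_eq_left.2 hSnn] at hsplit; linarith
    · rw [sup_eq_left.2 h] at hsplit
      rcases le_total (c - g s) (SL g c t₀ u) with h2 | h2
      · rw [sup_eq_left.2 h2] at hsplit; linarith
      · rw [sup_eq_right.2 h2] at hsplit; exact hsplit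
  have hsu : u < s := by
    rcases lt_or_eq_of_le hs.1 with h | h
    · exact h
    · exfalso
      have : c - g s ≤ SL g c t₀ u := by
        rw [← h]; exact le_SL hg hu (le_max_left _ _)
      linarith
  have h1 : c - g s ≤ SL g c t₀ s := le_SL hg (hu.trans hs.1) (le_max_left _ _)
  have h2 : SL g c t₀ s ≤ SL g c t₀ v := SL_mono hg hs.2
  exact ⟨s, hsu, hs.2, by linarith⟩

lemma SL_const_of (hg : Continuous g) {u v : ℝ} (hu : t₀ ≤ u) (huv : u ≤ v)
    (h : ∀ s, u < s → s ≤ v → g s + SL g c t₀ s ≠ c) : SL g c t₀ u = SL g c t₀ v := by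
  by_contra hne
  have hlt : SL g c t₀ u < SL g c t₀ v := lt_of_le_of_ne (SL_mono hg huv) hne
  obtain ⟨s, h1, h2, h3⟩ := SL_touch hg hu huv hlt
  exact h s h1 h2 h3

/-- Before any touch of the upper level `d`, the reflected path stays `≤ d`. -/
lemma W_le_pre_hit (hg : Continuous g) {d t : ℝ} (h0 : g t₀ + SL g c t₀ t₀ ≤ d)
    (ht : t₀ ≤ t) (hno : ∀ r, t₀ ≤ r → r < t → g r + SL g c t₀ r ≠ d) :
    g t + SL g c t₀ t ≤ d := by
  by_contra hgt
  push_neg at hgt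
  have hcont : ContinuousOn (fun r => g r + SL g c t₀ r) (Icc t₀ t) :=
    (hg.add (SL_cont hg)).continuousOn
  have : d ∈ Icc (g t₀ + SL g c t₀ t₀) (g t + SL g c t₀ t) := ⟨h0, le_of_lt hgt⟩
  obtain ⟨r, hr, hrd⟩ := intermediate_value_Icc ht hcont this
  rcases lt_or_eq_of_le hr.2 with h | h
  · exact hno r hr.1 h hrd
  · rw [h] at hrd
    simp only at hrd
    linarith

/-- Oscillation: if the path starts at the barrier `c` and the reflected path reaches `d` at `σ`,
then `g σ - g s = d - c` for some `s` in `[t₀, σ]`. -/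
lemma osc_of_hit (hg : Continuous g) {d σ : ℝ} (hstart : g t₀ = c) (hσ : t₀ ≤ σ)
    (hVσ : g σ + SL g c t₀ σ = d) :
    ∃ s, t₀ ≤ s ∧ s ≤ σ ∧ g σ - g s = d - c := by
  set V := fun t => g t + SL g c t₀ t with hV
  set A := {s ∈ Icc t₀ σ | V s = c} with hA
  have hVc : Continuous V := hg.add (SL_cont hg)
  have hAne : A.Nonempty := ⟨t₀, ⟨le_rfl, hσ⟩, by
    rw [hV]; simp only; rw [W_start (le_of_eq hstart.symm), hstart]⟩
  have hAcomp : IsCompact A := isCompact_Icc.inter_right (isClosed_eq hVc continuous_const)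
  have hsmem : sSup A ∈ A := hAcomp.sSup_mem hAne
  set s := sSup A with hs
  have hs1 : t₀ ≤ s := hsmem.1.1
  have hs2 : s ≤ σ := hsmem.1.2
  have hconst : SL g c t₀ s = SL g c t₀ σ := by
    refine SL_const_of hg hs1 hs2 ?_
    intro r h1 h2 h3
    have : r ∈ A := ⟨⟨hs1.trans (le_of_lt h1), h2⟩, h3⟩
    have : r ≤ s := le_csSup hAcomp.bddAbove this
    linarith
  have hVs : V s = c := hsmem.2
  refine ⟨s, hs1, hs2, ?_⟩
  have : g s + SL g c t₀ s = c := hVs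
  have h2 : g σ + SL g c t₀ σ = d := hVσ
  linarith [hconst]

end SLsec

/-! ### The phase construction -/

noncomputable def step (a b : ℝ) (F : ℝ → ℝ) (n : ℕ) (x : ℝ × ℝ × ℝ × Bool) :
    ℝ × ℝ × ℝ × Bool :=
  match x with
  | (t₀, ℓ, u, al) =>
    if al then
      if Even n then
        let g : ℝ → ℝ := fun s => F s + ℓ - u
        let H := {t : ℝ | t₀ ≤ t ∧ g t + SL g a t₀ t = b}
        if H.Nonempty then (sInf H, ℓ + SL g a t₀ (sInf H), u, true) else (t₀, ℓ, u, false)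
      else
        let g : ℝ → ℝ := fun s => -(F s + ℓ - u)
        let H := {t : ℝ | t₀ ≤ t ∧ g t + SL g (-b) t₀ t = -a}
        if H.Nonempty then (sInf H, ℓ, u + SL g (-b) t₀ (sInf H), true) else (t₀, ℓ, u, false)
    else (t₀, ℓ, u, false)

noncomputable def st (a b : ℝ) (F : ℝ → ℝ) : ℕ → ℝ × ℝ × ℝ × Bool
  | 0 => (0, 0, 0, true)
  | n+1 => step a b F n (st a b F n)

noncomputable def tau (a b : ℝ) (F : ℝ → ℝ) (n : ℕ) : ℝ := (st a b F n).1
noncomputable def lv (a b : ℝ) (F : ℝ → ℝ) (n : ℕ) : ℝ := (st a b F n).2.1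
noncomputable def uv (a b : ℝ) (F : ℝ → ℝ) (n : ℕ) : ℝ := (st a b F n).2.2.1
def alive (a b : ℝ) (F : ℝ → ℝ) (n : ℕ) : Prop := (st a b F n).2.2.2 = true

noncomputable def gph (a b : ℝ) (F : ℝ → ℝ) (n : ℕ) : ℝ → ℝ :=
  if Even n then fun s => F s + lv a b F n - uv a b F n
  else fun s => -(F s + lv a b F n - uv a b F n)

noncomputable def cph (a b : ℝ) (n : ℕ) : ℝ := if Even n then a else -b
noncomputable def dph (a b : ℝ) (n : ℕ) : ℝ := if Even n then b else -a

noncomputable def Vph (a b : ℝ) (F : ℝ → ℝ) (n : ℕ) (t : ℝ) : ℝ :=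
  gph a b F n t + SL (gph a b F n) (cph a b n) (tau a b F n) t

def Hset (a b : ℝ) (F : ℝ → ℝ) (n : ℕ) : Set ℝ :=
  {t : ℝ | tau a b F n ≤ t ∧ Vph a b F n t = dph a b n}

noncomputable def phiL (a b : ℝ) (F : ℝ → ℝ) (n : ℕ) (t : ℝ) : ℝ :=
  if Even n then lv a b F n + SL (gph a b F n) (cph a b n) (tau a b F n) t else lv a b F n

noncomputable def phiU (a b : ℝ) (F : ℝ → ℝ) (n : ℕ) (t : ℝ) : ℝ :=
  if Even n then uv a b F n else uv a b F n + SL (gph a b F n) (cph a b n) (tau a b F n) t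

section PhaseSec
variable {a b : ℝ} {F : ℝ → ℝ}

lemma alive_zero : alive a b F 0 := rfl
lemma tau_zero : tau a b F 0 = 0 := rfl
lemma lv_zero : lv a b F 0 = 0 := rfl
lemma uv_zero : uv a b F 0 = 0 := rfl

lemma phiZ_eq (n : ℕ) (t : ℝ) :
    F t + phiL a b F n t - phiU a b F n t =
      (if Even n then Vph a b F n t else -(Vph a b F n t)) := by
  by_cases h : Even n <;> simp only [phiL, phiU, Vph, gph, cph, if_pos, if_neg, h, if_true,
    if_false] <;> ring

/-- step unfolding, even alive case -/
lemma st_succ_even (n : ℕ) (hn : Even n) (hal : alive a b F n) :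
    st a b F (n+1) =
      (if (Hset a b F n).Nonempty then
        (sInf (Hset a b F n), phiL a b F n (sInf (Hset a b F n)), uv a b F n, true)
      else (tau a b F n, lv a b F n, uv a b F n, false)) := by
  have h2 : st a b F n = (tau a b F n, lv a b F n, uv a b F n, (st a b F n).2.2.2) := rfl
  have hal' : (st a b F n).2.2.2 = true := hal
  show step a b F n (st a b F n) = _
  conv_lhs => rw [h2, hal']
  simp only [step, hn, if_true, Hset, Vph, phiL, gph, cph, dph, ite_true]

lemma st_succ_odd (n : ℕ) (hn : ¬ Even n) (hal : alive a b F n) :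
    st a b F (n+1) =
      (if (Hset a b F n).Nonempty then
        (sInf (Hset a b F n), lv a b F n, phiU a b F n (sInf (Hset a b F n)), true)
      else (tau a b F n, lv a b F n, uv a b F n, false)) := by
  have h2 : st a b F n = (tau a b F n, lv a b F n, uv a b F n, (st a b F n).2.2.2) := rfl
  have hal' : (st a b F n).2.2.2 = true := hal
  show step a b F n (st a b F n) = _
  conv_lhs => rw [h2, hal']
  simp only [step, hn, if_true, if_false, Hset, Vph, phiU, gph, cph, dph, ite_true, ite_false]

lemma st_succ_dead (n : ℕ) (hal : ¬ alive a b F n) : st a b F (n+1) = st a b F n := by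
  have h1 : st a b F (n+1) = step a b F n (st a b F n) := rfl
  have h2 : st a b F n = (tau a b F n, lv a b F n, uv a b F n, (st a b F n).2.2.2) := rfl
  have hal' : (st a b F n).2.2.2 = false := by
    revert hal
    rw [alive]
    cases (st a b F n).2.2.2 <;> simp
  rw [h1]
  conv_lhs => rw [h2]
  rw [hal']
  simp only [step, if_false, Bool.false_eq_true]
  conv_rhs => rw [h2, hal']

lemma alive_of_succ {n : ℕ} (h : alive a b F (n+1)) : alive a b F n := by
  by_contra hn
  have h2 := st_succ_dead (a := a) (b := b) (F := F) n hn
  rw [alive, h2] at h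
  exact hn h

lemma alive_of_le {m n : ℕ} (hmn : m ≤ n) : alive a b F n → alive a b F m := by
  induction hmn with
  | refl => exact id
  | step h ih => exact fun hal => ih (alive_of_succ hal)

lemma gph_cont (hF : Continuous F) (n : ℕ) : Continuous (gph a b F n) := by
  rw [gph]; split_ifs
  · exact (hF.add continuous_const).sub continuous_const
  · exact ((hF.add continuous_const).sub continuous_const).neg

lemma Vph_cont (hF : Continuous F) (n : ℕ) : Continuous (Vph a b F n) := by
  show Continuous fun t => gph a b F n t + SL (gph a b F n) (cph a b n) (tau a b F n) t
  exact (gph_cont hF n).add (SL_cont (gph_cont hF n))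

lemma Hset_closed (hF : Continuous F) (n : ℕ) : IsClosed (Hset a b F n) := by
  have : Hset a b F n = Ici (tau a b F n) ∩ {t | Vph a b F n t = dph a b n} := rfl
  rw [this]
  exact isClosed_Ici.inter (isClosed_eq (Vph_cont hF n) continuous_const)

lemma Hset_bddBelow (n : ℕ) : BddBelow (Hset a b F n) := ⟨tau a b F n, fun _ hx => hx.1⟩

lemma cph_lt_dph (hab : a < b) (n : ℕ) : cph a b n < dph a b n := by
  rw [cph, dph]; split_ifs <;> linarith

lemma st_succ_alive {n : ℕ} (hal : alive a b F n) :
    st a b F (n+1) =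
      (if (Hset a b F n).Nonempty then
        (sInf (Hset a b F n), phiL a b F n (sInf (Hset a b F n)),
          phiU a b F n (sInf (Hset a b F n)), true)
      else (tau a b F n, lv a b F n, uv a b F n, false)) := by
  rcases Nat.even_or_odd n with hn | hn
  · rw [st_succ_even n hn hal]
    simp only [phiU, hn, ite_true]
  · rw [← Nat.not_even_iff_odd] at hn
    rw [st_succ_odd n hn hal]
    simp only [phiL, hn, ite_false]

lemma st_succ_hit {n : ℕ} (hal : alive a b F n) (hne : (Hset a b F n).Nonempty) :
    alive a b F (n+1) ∧ tau a b F (n+1) = sInf (Hset a b F n) ∧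
      lv a b F (n+1) = phiL a b F n (sInf (Hset a b F n)) ∧
      uv a b F (n+1) = phiU a b F n (sInf (Hset a b F n)) := by
  have h := st_succ_alive hal
  rw [if_pos hne] at h
  exact ⟨by rw [alive, h], by rw [tau, h], by rw [lv, h], by rw [uv, h]⟩

lemma st_succ_miss {n : ℕ} (hal : alive a b F n) (hne : ¬ (Hset a b F n).Nonempty) :
    ¬ alive a b F (n+1) ∧ tau a b F (n+1) = tau a b F n := by
  have h := st_succ_alive hal
  rw [if_neg hne] at h
  exact ⟨by rw [alive, h]; simp, by rw [tau, h]⟩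

lemma Hset_ne_of_succ {n : ℕ} (h : alive a b F (n+1)) : (Hset a b F n).Nonempty := by
  by_contra hne
  exact (st_succ_miss (alive_of_succ h) hne).1 h

lemma hit_mem (hF : Continuous F) {n : ℕ} (h : alive a b F (n+1)) :
    tau a b F n ≤ tau a b F (n+1) ∧ Vph a b F n (tau a b F (n+1)) = dph a b n := by
  have hne := Hset_ne_of_succ h
  have h2 := (st_succ_hit (alive_of_succ h) hne).2.1
  rw [h2]
  exact (Hset_closed hF n).csInf_mem hne (Hset_bddBelow n)

lemma tau_mono : Monotone (tau a b F) := by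
  refine monotone_nat_of_le_succ fun n => ?_
  by_cases hal : alive a b F n
  · by_cases hne : (Hset a b F n).Nonempty
    · rw [(st_succ_hit hal hne).2.1]
      exact le_csInf hne fun x hx => hx.1
    · rw [(st_succ_miss hal hne).2]
  · exact le_of_eq (congrArg Prod.fst (st_succ_dead n hal)).symm

lemma tau_nonneg (n : ℕ) : 0 ≤ tau a b F n := by
  have := tau_mono (a := a) (b := b) (F := F) (Nat.zero_le n)
  rwa [tau_zero] at this

lemma not_hit {n : ℕ} (h : alive a b F n) {r : ℝ} (hr : tau a b F n ≤ r)
    (hcond : ¬ alive a b F (n+1) ∨ r < tau a b F (n+1)) : Vph a b F n r ≠ dph a b n := by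
  intro hV
  by_cases hne : (Hset a b F n).Nonempty
  · have hmem : r ∈ Hset a b F n := ⟨hr, hV⟩
    have h1 := (st_succ_hit h hne).1
    have h2 := (st_succ_hit h hne).2.1
    rcases hcond with hc | hc
    · exact hc h1
    · rw [h2] at hc
      exact absurd (csInf_le (Hset_bddBelow n) hmem) (not_le.2 hc)
  · exact hne ⟨r, hr, hV⟩

lemma start_barrier (hF : Continuous F) {n : ℕ} (h : alive a b F (n+1)) :
    gph a b F (n+1) (tau a b F (n+1)) = cph a b (n+1) := by
  have hne := Hset_ne_of_succ h
  have hal := alive_of_succ h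
  have hs := st_succ_hit hal hne
  have hV := (hit_mem hF h).2
  set σ := tau a b F (n+1) with hσ
  have hσ' : σ = sInf (Hset a b F n) := hs.2.1
  have hkey : F σ + lv a b F (n+1) - uv a b F (n+1) =
      (if Even n then Vph a b F n σ else -(Vph a b F n σ)) := by
    rw [hσ'] at *
    rw [hs.2.2.1, hs.2.2.2]
    exact phiZ_eq n _
  rcases Nat.even_or_odd n with hn | hn
  · have hn1 : ¬ Even (n+1) := by simp [Nat.even_add_one, hn]
    rw [if_pos hn, hV] at hkey
    rw [dph, if_pos hn] at hkey
    show gph a b F (n+1) σ = cph a b (n+1)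
    rw [gph, if_neg hn1, cph, if_neg hn1]
    show -(F σ + lv a b F (n+1) - uv a b F (n+1)) = -b
    rw [hkey]
  · rw [← Nat.not_even_iff_odd] at hn
    have hn1 : Even (n+1) := Nat.even_add_one.2 hn
    rw [if_neg hn, hV] at hkey
    rw [dph, if_neg hn] at hkey
    show gph a b F (n+1) σ = cph a b (n+1)
    rw [gph, if_pos hn1, cph, if_pos hn1]
    show F σ + lv a b F (n+1) - uv a b F (n+1) = a
    rw [hkey]
    ring

lemma inv_start (hF : Continuous F) (hab : a < b) (h0a : a ≤ F 0) (h0b : F 0 ≤ b) {n : ℕ}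
    (h : alive a b F n) :
    cph a b n ≤ gph a b F n (tau a b F n) ∧ gph a b F n (tau a b F n) ≤ dph a b n := by
  cases n with
  | zero =>
    have : gph a b F 0 (tau a b F 0) = F 0 := by
      rw [gph, if_pos (Even.zero), tau_zero, lv_zero, uv_zero]
      simp
    rw [this, cph, dph, if_pos Even.zero, if_pos Even.zero]
    exact ⟨h0a, h0b⟩
  | succ m =>
    rw [start_barrier hF h]
    exact ⟨le_rfl, le_of_lt (cph_lt_dph hab (m+1))⟩

lemma Vph_start (hF : Continuous F) (hab : a < b) (h0a : a ≤ F 0) (h0b : F 0 ≤ b) {n : ℕ}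
    (h : alive a b F n) : Vph a b F n (tau a b F n) = gph a b F n (tau a b F n) :=
  W_start (inv_start hF hab h0a h0b h).1

lemma tau_strict (hF : Continuous F) (hab : a < b) {n : ℕ} (hn : 1 ≤ n)
    (h : alive a b F (n+1)) : tau a b F n < tau a b F (n+1) := by
  rcases lt_or_eq_of_le (hit_mem hF h).1 with hlt | heq
  · exact hlt
  · exfalso
    have h1 := (hit_mem hF h).2
    rw [← heq] at h1
    have hal : alive a b F n := alive_of_succ h
    obtain ⟨m, rfl⟩ : ∃ m, n = m + 1 := ⟨n - 1, (Nat.succ_pred_eq_of_pos hn).symm⟩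
    have hsb := start_barrier hF hal
    have h2 : Vph a b F (m+1) (tau a b F (m+1)) = cph a b (m+1) := by
      have hw := W_start (g := gph a b F (m+1)) (c := cph a b (m+1))
        (t₀ := tau a b F (m+1)) (le_of_eq hsb.symm)
      show gph a b F (m+1) (tau a b F (m+1)) +
        SL (gph a b F (m+1)) (cph a b (m+1)) (tau a b F (m+1)) (tau a b F (m+1)) = cph a b (m+1)
      rw [hw, hsb]
    rw [h1] at h2
    exact absurd h2.symm (ne_of_lt (cph_lt_dph hab _))

lemma phase_bounds (hF : Continuous F) (hab : a < b) (h0a : a ≤ F 0) (h0b : F 0 ≤ b) {n : ℕ}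
    (h : alive a b F n) {t : ℝ} (ht : tau a b F n ≤ t)
    (hcond : ¬ alive a b F (n+1) ∨ t < tau a b F (n+1)) :
    cph a b n ≤ Vph a b F n t ∧ Vph a b F n t ≤ dph a b n := by
  constructor
  · exact W_ge (gph_cont hF n) ht
  · refine W_le_pre_hit (gph_cont hF n) ?_ ht fun r h1 h2 => ?_
    · have := Vph_start hF hab h0a h0b h
      show Vph a b F n _ ≤ _
      rw [this]
      exact (inv_start hF hab h0a h0b h).2
    · refine not_hit h h1 ?_
      rcases hcond with hc | hc
      · exact Or.inl hc
      · exact Or.inr (h2.trans hc)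

lemma phiL_boundary (hF : Continuous F) {n : ℕ} (h : alive a b F (n+1)) :
    phiL a b F (n+1) (tau a b F (n+1)) = phiL a b F n (tau a b F (n+1)) ∧
    phiU a b F (n+1) (tau a b F (n+1)) = phiU a b F n (tau a b F (n+1)) := by
  have hne := Hset_ne_of_succ h
  have hal := alive_of_succ h
  have hs := st_succ_hit hal hne
  have hSL : SL (gph a b F (n+1)) (cph a b (n+1)) (tau a b F (n+1)) (tau a b F (n+1)) = 0 := by
    rw [SL_left _ le_rfl, start_barrier hF h]
    simp
  constructor
  · rw [phiL, phiL]
    split_ifs with h1 h2 h2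
    · exact absurd (Nat.even_add_one.1 h1) (fun hc => hc h2)
    · rw [hSL, add_zero, hs.2.2.1, ← hs.2.1, phiL, if_neg h2]
    · rw [hs.2.2.1, ← hs.2.1, phiL, if_pos h2]
    · exact absurd (Nat.even_add_one.2 h2) h1
  · rw [phiU, phiU]
    split_ifs with h1 h2 h2
    · exact absurd (Nat.even_add_one.1 h1) (fun hc => hc h2)
    · rw [hs.2.2.2, ← hs.2.1, phiU, if_neg h2]
    · rw [hSL, add_zero, hs.2.2.2, ← hs.2.1, phiU, if_pos h2]
    · exact absurd (Nat.even_add_one.2 h2) h1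

/-! ### Oscillation and non-accumulation of phases -/

lemma osc_phase (hF : Continuous F) (hab : a < b) {n : ℕ} (h : alive a b F (n+2)) :
    ∃ s, tau a b F (n+1) ≤ s ∧ s ≤ tau a b F (n+2) ∧
      |F (tau a b F (n+2)) - F s| = b - a := by
  have hal1 : alive a b F (n+1) := alive_of_succ h
  have hstart := start_barrier hF hal1
  have hhit := hit_mem hF h
  obtain ⟨s, hs1, hs2, hs3⟩ := osc_of_hit (gph_cont hF (n+1)) hstart hhit.1 hhit.2
  refine ⟨s, hs1, hs2, ?_⟩
  rcases Nat.even_or_odd (n+1) with hn | hn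
  · rw [gph, if_pos hn, dph, if_pos hn, cph, if_pos hn] at hs3
    have hs3' : F (tau a b F (n+2)) + lv a b F (n+1) - uv a b F (n+1) -
        (F s + lv a b F (n+1) - uv a b F (n+1)) = b - a := hs3
    rw [abs_of_nonneg (by linarith)]
    linarith
  · rw [Nat.not_even_iff_odd.symm] at hn
    rw [gph, if_neg hn, dph, if_neg hn, cph, if_neg hn] at hs3
    have hs3' : -(F (tau a b F (n+2)) + lv a b F (n+1) - uv a b F (n+1)) -
        -(F s + lv a b F (n+1) - uv a b F (n+1)) = -a - -b := hs3
    rw [abs_of_nonpos (by linarith)]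
    linarith

lemma exists_not_lt (hF : Continuous F) (hab : a < b) (T : ℝ)
    (hall : ∀ n, alive a b F n) : ∃ n, T < tau a b F n := by
  by_contra hc
  push_neg at hc
  have hT : 0 ≤ T := le_trans (tau_nonneg 0) (hc 0)
  obtain ⟨δ, hδ, hucont⟩ := Metric.uniformContinuousOn_iff.1
    (isCompact_Icc.uniformContinuousOn_of_continuous
      (hF.continuousOn : ContinuousOn F (Icc 0 T))) (b - a) (by linarith)
  have hmono := tau_mono (a := a) (b := b) (F := F)
  have hbdd : BddAbove (range (tau a b F)) := ⟨T, by rintro x ⟨n, rfl⟩; exact hc n⟩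
  have hcauchy := (tendsto_atTop_ciSup hmono hbdd).cauchySeq
  rw [Metric.cauchySeq_iff'] at hcauchy
  obtain ⟨N, hN⟩ := hcauchy δ hδ
  obtain ⟨s, hs1, hs2, hs3⟩ := osc_phase hF hab (n := N) (hall (N+2))
  have h1 : dist (tau a b F (N+2)) (tau a b F N) < δ := hN (N+2) (by omega)
  have hm1 : tau a b F N ≤ tau a b F (N+1) := hmono (by omega)
  have hdist : dist (tau a b F (N+2)) s < δ := by
    rw [Real.dist_eq, abs_sub_lt_iff]
    rw [Real.dist_eq, abs_sub_lt_iff] at h1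
    constructor
    · linarith [h1.1]
    · linarith [h1.1, hmono (show N+1 ≤ N+2 by omega)]
  have hmem1 : tau a b F (N+2) ∈ Icc (0:ℝ) T := ⟨tau_nonneg _, hc _⟩
  have hmems : s ∈ Icc (0:ℝ) T := ⟨(tau_nonneg (N+1)).trans hs1, hs2.trans (hc _)⟩
  have := hucont _ hmem1 _ hmems hdist
  rw [Real.dist_eq, hs3] at this
  linarith

/-! ### The covering phase index -/

def covers (a b : ℝ) (F : ℝ → ℝ) (n : ℕ) (t : ℝ) : Prop :=
  alive a b F n ∧ tau a b F n ≤ t ∧ (¬ alive a b F (n+1) ∨ t < tau a b F (n+1))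

lemma covers_of_lt {n : ℕ} (hal : alive a b F n) (t : ℝ) (ht : 0 ≤ t)
    (hlt : t < tau a b F n) : ∃ k, covers a b F k t := by
  have hex : ∃ k, t < tau a b F k := ⟨n, hlt⟩
  have hks : t < tau a b F (Nat.find hex) := Nat.find_spec hex
  have hk1 : Nat.find hex ≠ 0 := by
    intro h
    rw [h, tau_zero] at hks
    linarith
  obtain ⟨m, hm⟩ := Nat.exists_eq_succ_of_ne_zero hk1
  have hkm : Nat.find hex ≤ n := Nat.find_min' hex hlt
  have halm : alive a b F m := alive_of_le (by omega) hal
  have hτm : tau a b F m ≤ t := by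
    by_contra hc
    push_neg at hc
    have := Nat.find_min' hex hc
    omega
  rw [hm] at hks
  exact ⟨m, halm, hτm, Or.inr hks⟩

lemma exists_covers (hF : Continuous F) (hab : a < b) (t : ℝ) (ht : 0 ≤ t) :
    ∃ n, covers a b F n t := by
  by_cases hall : ∀ n, alive a b F n
  · obtain ⟨n0, hn0⟩ := exists_not_lt hF hab t hall
    rcases le_or_gt (tau a b F n0) t with h | h
    · linarith
    · exact covers_of_lt (hall n0) t ht h
  · push_neg at hall
    have hex0 : ∃ m, ¬ alive a b F m := hall
    have hMdead := Nat.find_spec hex0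
    have hM1 : Nat.find hex0 ≠ 0 := fun h => (h ▸ hMdead) alive_zero
    obtain ⟨m, hm⟩ := Nat.exists_eq_succ_of_ne_zero hM1
    have halm : alive a b F m := by
      by_contra hc
      have := Nat.find_min' hex0 hc
      omega
    rcases le_or_gt (tau a b F m) t with hle | hlt
    · exact ⟨m, halm, hle, Or.inl (by rwa [hm] at hMdead)⟩
    · exact covers_of_lt halm t ht hlt

lemma covers_unique {m n : ℕ} {t : ℝ} (hm : covers a b F m t) (hn : covers a b F n t) :
    m = n := by
  by_contra hne
  wlog hlt : m < n generalizing m n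
  · exact this hn hm (Ne.symm hne) (by omega)
  have hal1 : alive a b F (m+1) := alive_of_le (by omega) hn.1
  rcases hm.2.2 with hc | hc
  · exact hc hal1
  · have := tau_mono (a := a) (b := b) (F := F) (show m + 1 ≤ n by omega)
    linarith [hn.2.1]

end PhaseSec

noncomputable def idx (a b : ℝ) (F : ℝ → ℝ) (t : ℝ) : ℕ :=
  sInf {n | covers a b F n (max t 0)}

noncomputable def Lfun (a b : ℝ) (F : ℝ → ℝ) (t : ℝ) : ℝ :=
  phiL a b F (idx a b F t) (max t 0)

noncomputable def Ufun (a b : ℝ) (F : ℝ → ℝ) (t : ℝ) : ℝ :=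
  phiU a b F (idx a b F t) (max t 0)

section GlobalSec
variable {a b : ℝ} {F : ℝ → ℝ}

lemma covers_idx (hF : Continuous F) (hab : a < b) (t : ℝ) :
    covers a b F (idx a b F t) (max t 0) :=
  Nat.sInf_mem (exists_covers hF hab (max t 0) (le_max_right t 0))

lemma idx_eq {n : ℕ} {t : ℝ} (h : covers a b F n (max t 0)) : idx a b F t = n :=
  covers_unique (Nat.sInf_mem (⟨n, h⟩ : ∃ k, covers a b F k (max t 0))) h

lemma Lfun_eq {n : ℕ} {t : ℝ} (h : covers a b F n (max t 0)) :
    Lfun a b F t = phiL a b F n (max t 0) := by rw [Lfun, idx_eq h]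

lemma Ufun_eq {n : ℕ} {t : ℝ} (h : covers a b F n (max t 0)) :
    Ufun a b F t = phiU a b F n (max t 0) := by rw [Ufun, idx_eq h]

lemma Lfun_eq' {n : ℕ} {t : ℝ} (ht : 0 ≤ t) (h : covers a b F n t) :
    Lfun a b F t = phiL a b F n t := by
  rw [Lfun_eq (by rwa [max_eq_left ht]), max_eq_left ht]

lemma Ufun_eq' {n : ℕ} {t : ℝ} (ht : 0 ≤ t) (h : covers a b F n t) :
    Ufun a b F t = phiU a b F n t := by
  rw [Ufun_eq (by rwa [max_eq_left ht]), max_eq_left ht]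

/-! ### Monotonicity of the glued functions -/

lemma lv_succ {n : ℕ} (h : alive a b F (n+1)) :
    lv a b F (n+1) = phiL a b F n (tau a b F (n+1)) := by
  have hs := st_succ_hit (alive_of_succ h) (Hset_ne_of_succ h)
  rw [hs.2.2.1, hs.2.1]

lemma uv_succ {n : ℕ} (h : alive a b F (n+1)) :
    uv a b F (n+1) = phiU a b F n (tau a b F (n+1)) := by
  have hs := st_succ_hit (alive_of_succ h) (Hset_ne_of_succ h)
  rw [hs.2.2.2, hs.2.1]

lemma lv_le_phiL (n : ℕ) (t : ℝ) : lv a b F n ≤ phiL a b F n t := by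
  rw [phiL]; split_ifs
  · linarith [SL_nonneg (gph a b F n) (cph a b n) (tau a b F n) t]
  · exact le_rfl

lemma uv_le_phiU (n : ℕ) (t : ℝ) : uv a b F n ≤ phiU a b F n t := by
  rw [phiU]; split_ifs
  · exact le_rfl
  · linarith [SL_nonneg (gph a b F n) (cph a b n) (tau a b F n) t]

lemma phiL_mono (hF : Continuous F) (n : ℕ) : Monotone (phiL a b F n) := by
  intro s t hst
  rw [phiL, phiL]; split_ifs
  · exact add_le_add_right (SL_mono (gph_cont hF n) hst) _
  · exact le_rfl

lemma phiU_mono (hF : Continuous F) (n : ℕ) : Monotone (phiU a b F n) := by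
  intro s t hst
  rw [phiU, phiU]; split_ifs
  · exact le_rfl
  · exact add_le_add_right (SL_mono (gph_cont hF n) hst) _

lemma lv_le_of_le (hF : Continuous F) {m n : ℕ} (hmn : m ≤ n) (h : alive a b F n) :
    lv a b F m ≤ lv a b F n := by
  induction hmn with
  | refl => exact le_rfl
  | @step k hk ih =>
    have halk : alive a b F (k+1) := alive_of_le (by omega) h
    refine le_trans (ih (alive_of_succ halk)) ?_
    rw [lv_succ halk]
    exact lv_le_phiL k _

lemma uv_le_of_le (hF : Continuous F) {m n : ℕ} (hmn : m ≤ n) (h : alive a b F n) :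
    uv a b F m ≤ uv a b F n := by
  induction hmn with
  | refl => exact le_rfl
  | @step k hk ih =>
    have halk : alive a b F (k+1) := alive_of_le (by omega) h
    refine le_trans (ih (alive_of_succ halk)) ?_
    rw [uv_succ halk]
    exact uv_le_phiU k _

lemma idx_le_of_covers {m n : ℕ} {s t : ℝ} (hcm : covers a b F m s) (hcn : covers a b F n t)
    (hst : s ≤ t) : m ≤ n := by
  by_contra hc
  push_neg at hc
  have hal1 : alive a b F (n+1) := alive_of_le (by omega) hcm.1
  rcases hcn.2.2 with h | h
  · exact h hal1
  · have := tau_mono (a := a) (b := b) (F := F) (show n + 1 ≤ m by omega)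
    linarith [hcm.2.1]

lemma cross_mono_L (hF : Continuous F) {m n : ℕ} {s t : ℝ}
    (hcm : covers a b F m s) (hcn : covers a b F n t) (hst : s ≤ t) :
    phiL a b F m s ≤ phiL a b F n t := by
  have hmn : m ≤ n := idx_le_of_covers hcm hcn hst
  rcases Nat.eq_or_lt_of_le hmn with rfl | hlt
  · exact phiL_mono hF m hst
  · have hal1 : alive a b F (m+1) := alive_of_le (by omega) hcn.1
    have hs1 : s ≤ tau a b F (m+1) := by
      rcases hcm.2.2 with h | h
      · exact absurd hal1 h
      · exact le_of_lt h
    calc phiL a b F m s ≤ phiL a b F m (tau a b F (m+1)) := phiL_mono hF m hs1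
      _ = lv a b F (m+1) := (lv_succ hal1).symm
      _ ≤ lv a b F n := lv_le_of_le hF (by omega) hcn.1
      _ ≤ phiL a b F n t := lv_le_phiL n t

lemma cross_mono_U (hF : Continuous F) {m n : ℕ} {s t : ℝ}
    (hcm : covers a b F m s) (hcn : covers a b F n t) (hst : s ≤ t) :
    phiU a b F m s ≤ phiU a b F n t := by
  have hmn : m ≤ n := idx_le_of_covers hcm hcn hst
  rcases Nat.eq_or_lt_of_le hmn with rfl | hlt
  · exact phiU_mono hF m hst
  · have hal1 : alive a b F (m+1) := alive_of_le (by omega) hcn.1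
    have hs1 : s ≤ tau a b F (m+1) := by
      rcases hcm.2.2 with h | h
      · exact absurd hal1 h
      · exact le_of_lt h
    calc phiU a b F m s ≤ phiU a b F m (tau a b F (m+1)) := phiU_mono hF m hs1
      _ = uv a b F (m+1) := (uv_succ hal1).symm
      _ ≤ uv a b F n := uv_le_of_le hF (by omega) hcn.1
      _ ≤ phiU a b F n t := uv_le_phiU n t

lemma Lfun_mono (hF : Continuous F) (hab : a < b) : Monotone (Lfun a b F) := by
  intro s t hst
  rw [Lfun, Lfun]
  exact cross_mono_L hF (covers_idx hF hab s) (covers_idx hF hab t)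
    (max_le_max hst le_rfl)

lemma Ufun_mono (hF : Continuous F) (hab : a < b) : Monotone (Ufun a b F) := by
  intro s t hst
  rw [Ufun, Ufun]
  exact cross_mono_U hF (covers_idx hF hab s) (covers_idx hF hab t)
    (max_le_max hst le_rfl)

/-! ### Continuity of the glued functions -/

lemma phiL_cont (hF : Continuous F) (n : ℕ) : Continuous (phiL a b F n) := by
  by_cases h : Even n
  · have he : phiL a b F n = fun t => lv a b F n +
        SL (gph a b F n) (cph a b n) (tau a b F n) t := by
      funext t; rw [phiL, if_pos h]
    rw [he]; exact continuous_const.add (SL_cont (gph_cont hF n))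
  · have he : phiL a b F n = fun _ => lv a b F n := by funext t; rw [phiL, if_neg h]
    rw [he]; exact continuous_const

lemma phiU_cont (hF : Continuous F) (n : ℕ) : Continuous (phiU a b F n) := by
  by_cases h : Even n
  · have he : phiU a b F n = fun _ => uv a b F n := by funext t; rw [phiU, if_pos h]
    rw [he]; exact continuous_const
  · have he : phiU a b F n = fun t => uv a b F n +
        SL (gph a b F n) (cph a b n) (tau a b F n) t := by
      funext t; rw [phiU, if_neg h]
    rw [he]; exact continuous_const.add (SL_cont (gph_cont hF n))

lemma glue_cont (hF : Continuous F) (hab : a < b) (phi : ℕ → ℝ → ℝ) (G : ℝ → ℝ)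
    (hphi : ∀ n, Continuous (phi n))
    (hG : ∀ (n : ℕ) (t : ℝ), covers a b F n (max t 0) → G t = phi n (max t 0))
    (hbd : ∀ n, alive a b F (n+1) →
      phi (n+1) (tau a b F (n+1)) = phi n (tau a b F (n+1))) :
    Continuous G := by
  rw [continuous_iff_continuousAt]
  intro x
  have hbase : ∀ n, Continuous fun y : ℝ => phi n (max y 0) :=
    fun n => (hphi n).comp (continuous_id.max continuous_const)
  rcases lt_or_ge x 0 with hx | hx
  · -- negative region : locally constant
    have hc0 : covers a b F (idx a b F 0) 0 := by
      have := covers_idx hF hab 0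
      rwa [max_self] at this
    set n := idx a b F 0 with hn
    have hev : ∀ y ∈ Iio (0:ℝ), G y = phi n 0 := by
      intro y hy
      have hmy : max y 0 = 0 := max_eq_right (le_of_lt hy)
      rw [hG n y (by rwa [hmy]), hmy]
    have heq : G =ᶠ[𝓝 x] fun _ => phi n 0 := eventually_of_mem (Iio_mem_nhds hx) hev
    exact continuousAt_const.congr heq.symm
  · -- x ≥ 0
    have hmax : max x 0 = x := max_eq_left hx
    have hcx : covers a b F (idx a b F x) x := by
      have := covers_idx hF hab x
      rwa [hmax] at this
    set n := idx a b F x with hn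
    have hGx : G x = phi n x := by
      rw [hG n x (by rwa [hmax]), hmax]
    -- right continuity
    have hR : ContinuousWithinAt G (Ici x) x := by
      have key : ∀ᶠ y in 𝓝[Ici x] x, G y = phi n (max y 0) := by
        rcases hcx.2.2 with hdead | hlt
        · filter_upwards [self_mem_nhdsWithin] with y hy
          refine hG n y ⟨hcx.1, ?_, Or.inl hdead⟩
          exact le_trans hcx.2.1 (le_trans hy (le_max_left y 0))
        · filter_upwards [self_mem_nhdsWithin,
            eventually_nhdsWithin_of_eventually_nhds (Iio_mem_nhds hlt)] with y hy1 hy2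
          have hy0 : (0:ℝ) ≤ y := hx.trans hy1
          refine hG n y ⟨hcx.1, ?_, Or.inr ?_⟩
          · rw [max_eq_left hy0]; exact le_trans hcx.2.1 hy1
          · rwa [max_eq_left hy0]
      refine ((hbase n).continuousWithinAt).congr_of_eventuallyEq key ?_
      rw [hGx, hmax]
    -- left continuity
    have hL : ContinuousWithinAt G (Iic x) x := by
      rcases eq_or_lt_of_le hx with hx0 | hx0
      · -- x = 0 : left side constant
        have hev : ∀ y ∈ Iic x, G y = phi n 0 := by
          intro y hy
          have hmy : max y 0 = 0 := max_eq_right (hy.trans hx0.symm.le)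
          have hc : covers a b F n (max y 0) := by rw [hmy, hx0]; exact hcx
          rw [hG n y hc, hmy]
        refine (continuousWithinAt_const (b := phi n 0)).congr hev ?_
        exact hev x (mem_Iic.2 le_rfl)
      · -- x > 0
        have hτx : tau a b F n ≤ x := hcx.2.1
        rcases lt_or_eq_of_le hτx with hτlt | hτeq
        · -- interior of the phase
          have key : ∀ᶠ y in 𝓝[Iic x] x, G y = phi n (max y 0) := by
            filter_upwards [self_mem_nhdsWithin,
              eventually_nhdsWithin_of_eventually_nhds (Ioi_mem_nhds hτlt)] with y hy1 hy2
            have hy0 : (0:ℝ) ≤ y := le_of_lt (lt_of_le_of_lt (tau_nonneg n) hy2)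
            refine hG n y ⟨hcx.1, ?_, ?_⟩
            · rw [max_eq_left hy0]; exact le_of_lt hy2
            · rcases hcx.2.2 with hdead | hlt
              · exact Or.inl hdead
              · exact Or.inr (by rw [max_eq_left hy0]; exact lt_of_le_of_lt hy1 hlt)
          refine ((hbase n).continuousWithinAt).congr_of_eventuallyEq key ?_
          rw [hGx, hmax]
        · -- x is a phase boundary : use previous phase
          have hn0 : n ≠ 0 := by
            intro h
            rw [h, tau_zero] at hτeq
            linarith
          obtain ⟨m, hm⟩ := Nat.exists_eq_succ_of_ne_zero hn0
          rw [hm] at hcx hGx hτeq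
          have halm1 : alive a b F (m+1) := hcx.1
          have hτmx : tau a b F m < x := by
            rcases Nat.eq_zero_or_pos m with rfl | hm
            · rw [tau_zero]; exact hx0
            · rw [← hτeq]; exact tau_strict hF hab hm halm1
          have key : ∀ᶠ y in 𝓝[Iic x] x, G y = phi m (max y 0) := by
            filter_upwards [self_mem_nhdsWithin,
              eventually_nhdsWithin_of_eventually_nhds (Ioi_mem_nhds hτmx)] with y hy1 hy2
            have hy0 : (0:ℝ) ≤ y := le_of_lt (lt_of_le_of_lt (tau_nonneg m) hy2)
            rcases lt_or_eq_of_le (mem_Iic.1 hy1) with hylt | hyeq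
            · refine hG m y ⟨alive_of_succ halm1, ?_, Or.inr ?_⟩
              · rw [max_eq_left hy0]; exact le_of_lt hy2
              · rw [max_eq_left hy0, hτeq]; exact hylt
            · rw [hyeq, hG (m+1) x (by rwa [hmax]), hmax, ← hτeq, hbd m halm1]
          refine ((hbase m).continuousWithinAt).congr_of_eventuallyEq key ?_
          rw [hGx, hmax, ← hτeq, hbd m halm1]
    have := hL.union hR
    rwa [Iic_union_Ici, continuousWithinAt_univ] at this

lemma Lfun_cont (hF : Continuous F) (hab : a < b) : Continuous (Lfun a b F) :=
  glue_cont hF hab _ _ (phiL_cont hF) (fun _ _ h => Lfun_eq h)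
    (fun _ h => (phiL_boundary hF h).1)

lemma Ufun_cont (hF : Continuous F) (hab : a < b) : Continuous (Ufun a b F) :=
  glue_cont hF hab _ _ (phiU_cont hF) (fun _ _ h => Ufun_eq h)
    (fun _ h => (phiL_boundary hF h).2)

/-! ### Values at zero -/

lemma gph_zero : gph a b F 0 0 = F 0 := by
  rw [gph, if_pos Even.zero]
  show F 0 + lv a b F 0 - uv a b F 0 = F 0
  rw [lv_zero, uv_zero]; ring

lemma phiL_zero_eval (h0a : a ≤ F 0) : phiL a b F 0 0 = 0 := by
  rw [phiL, if_pos Even.zero, lv_zero, tau_zero, SL_left 0 le_rfl, cph, if_pos Even.zero,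
    gph_zero, sup_eq_right.2 (by linarith : a - F 0 ≤ 0)]
  ring

lemma idx_zero_le_one (hF : Continuous F) (hab : a < b) :
    tau a b F (idx a b F 0) = 0 ∧ idx a b F 0 ≤ 1 := by
  have hc : covers a b F (idx a b F 0) 0 := by
    have := covers_idx hF hab 0; rwa [max_self] at this
  have hτ0 : tau a b F (idx a b F 0) = 0 := le_antisymm hc.2.1 (tau_nonneg _)
  refine ⟨hτ0, ?_⟩
  by_contra h
  push_neg at h
  have hal2 : alive a b F 2 := alive_of_le (by omega) hc.1
  have h12 : tau a b F 1 < tau a b F 2 := tau_strict hF hab le_rfl hal2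
  have h2n : tau a b F 2 ≤ tau a b F (idx a b F 0) := tau_mono (by omega)
  have h01 : (0:ℝ) ≤ tau a b F 1 := tau_nonneg 1
  rw [hτ0] at h2n
  linarith

lemma Lfun_zero (hF : Continuous F) (hab : a < b) (h0a : a ≤ F 0) :
    Lfun a b F 0 = 0 := by
  obtain ⟨hτ0, hle⟩ := idx_zero_le_one hF hab
  have hc : covers a b F (idx a b F 0) 0 := by
    have := covers_idx hF hab 0; rwa [max_self] at this
  rw [Lfun, max_self]
  interval_cases h : idx a b F 0
  · rw [phiL_zero_eval h0a]
  · rw [phiL, if_neg (by decide : ¬ Even 1), lv_succ hc.1, hτ0, phiL_zero_eval h0a]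

lemma Ufun_zero (hF : Continuous F) (hab : a < b) (h0a : a ≤ F 0) (h0b : F 0 ≤ b) :
    Ufun a b F 0 = 0 := by
  obtain ⟨hτ0, hle⟩ := idx_zero_le_one hF hab
  have hc : covers a b F (idx a b F 0) 0 := by
    have := covers_idx hF hab 0; rwa [max_self] at this
  rw [Ufun, max_self]
  interval_cases h : idx a b F 0
  · rw [phiU, if_pos Even.zero, uv_zero]
  · have huv1 : uv a b F 1 = 0 := by
      rw [uv_succ hc.1, hτ0, phiU, if_pos Even.zero, uv_zero]
    have hlv1 : lv a b F 1 = 0 := by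
      rw [lv_succ hc.1, hτ0, phiL_zero_eval h0a]
    have hg1 : gph a b F 1 0 = -(F 0) := by
      rw [gph, if_neg (by decide : ¬ Even 1)]
      show -(F 0 + lv a b F 1 - uv a b F 1) = -(F 0)
      rw [hlv1, huv1]; ring
    rw [phiU, if_neg (by decide : ¬ Even 1), huv1, hτ0, SL_left 0 le_rfl, cph,
      if_neg (by decide : ¬ Even 1), hg1, sup_eq_right.2 (by linarith : -b - -(F 0) ≤ 0)]
    ring

/-! ### The reflected path stays in the band -/

lemma Z_mem (hF : Continuous F) (hab : a < b) (h0a : a ≤ F 0) (h0b : F 0 ≤ b)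
    {t : ℝ} (ht : 0 ≤ t) :
    a ≤ F t + Lfun a b F t - Ufun a b F t ∧ F t + Lfun a b F t - Ufun a b F t ≤ b := by
  have hc : covers a b F (idx a b F t) t := by
    have := covers_idx hF hab t; rwa [max_eq_left ht] at this
  rw [Lfun_eq' ht hc, Ufun_eq' ht hc]
  have hz := phiZ_eq (a := a) (b := b) (F := F) (idx a b F t) t
  have hb := phase_bounds hF hab h0a h0b hc.1 hc.2.1 hc.2.2
  rw [hz]
  by_cases h : Even (idx a b F t)
  · rw [if_pos h]
    rw [cph, if_pos h] at hb
    rw [dph, if_pos h] at hb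
    exact hb
  · rw [if_neg h]
    rw [cph, if_neg h] at hb
    rw [dph, if_neg h] at hb
    constructor <;> linarith [hb.1, hb.2]

end GlobalSec

/-! ### Support of the Stieltjes measures -/

noncomputable def endk (a b : ℝ) (F : ℝ → ℝ) (T : ℝ) (k : ℕ) : ℝ :=
  if alive a b F (k+1) then min (tau a b F (k+1)) T else T

def Jw (a b : ℝ) (F : ℝ → ℝ) (T : ℝ) (k : ℕ) : Set ℝ :=
  Icc (tau a b F k) (endk a b F T k)

section SuppSec
variable {a b : ℝ} {F : ℝ → ℝ}

lemma Jw_cover (hF : Continuous F) (hab : a < b) {T : ℝ} (hT : 0 ≤ T) {s : ℝ}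
    (hs : s ∈ Icc 0 T) : ∃ k, k ≤ idx a b F T ∧ s ∈ Jw a b F T k := by
  have hcT : covers a b F (idx a b F T) T := by
    have := covers_idx hF hab T; rwa [max_eq_left hT] at this
  have hcs : covers a b F (idx a b F s) s := by
    have := covers_idx hF hab s; rwa [max_eq_left hs.1] at this
  refine ⟨idx a b F s, idx_le_of_covers hcs hcT hs.2, hcs.2.1, ?_⟩
  rw [endk]
  by_cases hal : alive a b F (idx a b F s + 1)
  · rw [if_pos hal]
    rcases hcs.2.2 with h | h
    · exact absurd hal h
    · exact le_min (le_of_lt h) hs.2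
  · rw [if_neg hal]; exact hs.2

lemma on_Jw (hF : Continuous F) (hab : a < b) {T : ℝ} (hT : 0 ≤ T) {k : ℕ}
    (hk : k ≤ idx a b F T) {s : ℝ} (hsJ : s ∈ Jw a b F T k) :
    Lfun a b F s = phiL a b F k s ∧ Ufun a b F s = phiU a b F k s := by
  have hcT : covers a b F (idx a b F T) T := by
    have := covers_idx hF hab T; rwa [max_eq_left hT] at this
  have halk : alive a b F k := alive_of_le hk hcT.1
  have hs0 : (0:ℝ) ≤ s := le_trans (tau_nonneg k) hsJ.1
  by_cases hal : alive a b F (k+1)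
  · have hs2 : s ≤ tau a b F (k+1) := by
      have h2 := hsJ.2
      rw [endk, if_pos hal] at h2
      exact le_trans h2 (min_le_left _ _)
    rcases lt_or_eq_of_le hs2 with hlt | heq
    · have hcs : covers a b F k s := ⟨halk, hsJ.1, Or.inr hlt⟩
      exact ⟨Lfun_eq' hs0 hcs, Ufun_eq' hs0 hcs⟩
    · have hcs : covers a b F (k+1) s := by
        refine ⟨hal, le_of_eq heq.symm, ?_⟩
        by_cases hal2 : alive a b F (k+2)
        · exact Or.inr (by rw [heq]; exact tau_strict hF hab (by omega) hal2)
        · exact Or.inl hal2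
      have hbd := phiL_boundary hF hal
      constructor
      · rw [Lfun_eq' hs0 hcs, heq, hbd.1]
      · rw [Ufun_eq' hs0 hcs, heq, hbd.2]
  · have hcs : covers a b F k s := ⟨halk, hsJ.1, Or.inl hal⟩
    exact ⟨Lfun_eq' hs0 hcs, Ufun_eq' hs0 hcs⟩

lemma Jw_nonempty (hF : Continuous F) (hab : a < b) {T : ℝ} (hT : 0 ≤ T) {k : ℕ}
    (hk : k ≤ idx a b F T) : tau a b F k ≤ endk a b F T k := by
  have hcT : covers a b F (idx a b F T) T := by
    have := covers_idx hF hab T; rwa [max_eq_left hT] at this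
  have hτT : tau a b F k ≤ T := le_trans (tau_mono hk) hcT.2.1
  rw [endk]
  by_cases hal : alive a b F (k+1)
  · rw [if_pos hal]
    exact le_min (tau_mono (by omega)) hτT
  · rw [if_neg hal]; exact hτT

theorem Lsupp (hF : Continuous F) (hab : a < b) (h0a : a ≤ F 0) (h0b : F 0 ≤ b)
    (hm : Monotone (Lfun a b F)) (hc : Continuous (Lfun a b F)) (T : ℝ) :
    lsMeasure (Lfun a b F) hm hc
      {s | s ∈ Icc 0 T ∧ F s + Lfun a b F s - Ufun a b F s ≠ a} = 0 := by
  rcases lt_or_ge T 0 with hT | hT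
  · have he : {s | s ∈ Icc (0:ℝ) T ∧ F s + Lfun a b F s - Ufun a b F s ≠ a} = ∅ := by
      ext s
      simp only [mem_setOf_eq, mem_empty_iff_false, iff_false, not_and]
      intro h1
      exact absurd (le_trans h1.1 h1.2) (not_le.2 hT)
    rw [he]; exact measure_empty
  set N := idx a b F T with hN
  set E := {s | s ∈ Icc (0:ℝ) T ∧ F s + Lfun a b F s - Ufun a b F s ≠ a} with hE
  have hEsub : E ⊆ ⋃ k ∈ Finset.range (N+1), (E ∩ Jw a b F T k) := by
    intro s hs
    obtain ⟨k, hk, hkJ⟩ := Jw_cover hF hab hT hs.1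
    exact mem_biUnion (Finset.mem_range.2 (by omega)) ⟨hs, hkJ⟩
  refine measure_mono_null hEsub ?_
  refine le_antisymm (le_trans (measure_biUnion_finset_le _ _) ?_) zero_le
  rw [Finset.sum_eq_zero]
  intro k hk
  rw [Finset.mem_range] at hk
  have hkN : k ≤ N := by omega
  by_cases hev : Even k
  · -- active phase for L
    set V := {s : ℝ | Vph a b F k s ≠ cph a b k} with hV
    have hVopen : IsOpen (Ioo (tau a b F k) (endk a b F T k) ∩ V) := by
      refine isOpen_Ioo.inter ?_
      have : V = {s : ℝ | Vph a b F k s = cph a b k}ᶜ := rfl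
      rw [this]
      exact (isClosed_eq (Vph_cont hF k) continuous_const).isOpen_compl
    have hsub2 : E ∩ Jw a b F T k ⊆
        (Ioo (tau a b F k) (endk a b F T k) ∩ V) ∪ {tau a b F k} ∪ {endk a b F T k} := by
      intro s hs
      have hVs : s ∈ V := by
        have h1 := (on_Jw hF hab hT hkN hs.2).1
        have h2 := (on_Jw hF hab hT hkN hs.2).2
        have hz := phiZ_eq (a := a) (b := b) (F := F) k s
        rw [if_pos hev] at hz
        intro hVc
        apply hs.1.2
        rw [h1, h2, hz, hVc, cph, if_pos hev]
      rcases eq_or_lt_of_le hs.2.1 with h1 | h1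
      · exact Or.inl (Or.inr (mem_singleton_iff.2 h1.symm))
      rcases eq_or_lt_of_le hs.2.2 with h2 | h2
      · exact Or.inr (mem_singleton_iff.2 h2)
      · exact Or.inl (Or.inl ⟨⟨h1, h2⟩, hVs⟩)
    refine measure_mono_null hsub2 ?_
    refine measure_union_null (measure_union_null ?_ (lsMeasure_singleton _ _ _ _))
      (lsMeasure_singleton _ _ _ _)
    refine null_on_open _ hm hc _ hVopen ?_
    intro u v huv hIcc
    have huO := hIcc (left_mem_Icc.2 huv)
    have hvO := hIcc (right_mem_Icc.2 huv)
    have hJu : u ∈ Jw a b F T k := Ioo_subset_Icc_self huO.1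
    have hJv : v ∈ Jw a b F T k := Ioo_subset_Icc_self hvO.1
    rw [(on_Jw hF hab hT hkN hJu).1, (on_Jw hF hab hT hkN hJv).1, phiL, phiL,
      if_pos hev, if_pos hev]
    congr 1
    refine SL_const_of (gph_cont hF k) (le_of_lt huO.1.1) huv ?_
    intro r hr1 hr2 hrc
    exact (hIcc ⟨le_of_lt hr1, hr2⟩).2 hrc
  · -- inactive phase for L : constant
    have hconst : ∀ s ∈ Jw a b F T k, Lfun a b F s = lv a b F k := by
      intro s hs
      rw [(on_Jw hF hab hT hkN hs).1, phiL, if_neg hev]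
    refine measure_mono_null inter_subset_right ?_
    have hJI : Jw a b F T k = Icc (tau a b F k) (endk a b F T k) := rfl
    rw [hJI, lsMeasure_Icc _ hm hc,
      hconst _ (right_mem_Icc.2 (Jw_nonempty hF hab hT hkN)),
      hconst _ (left_mem_Icc.2 (Jw_nonempty hF hab hT hkN))]
    simp

theorem Usupp (hF : Continuous F) (hab : a < b) (h0a : a ≤ F 0) (h0b : F 0 ≤ b)
    (hm : Monotone (Ufun a b F)) (hc : Continuous (Ufun a b F)) (T : ℝ) :
    lsMeasure (Ufun a b F) hm hc
      {s | s ∈ Icc 0 T ∧ F s + Lfun a b F s - Ufun a b F s ≠ b} = 0 := by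
  rcases lt_or_ge T 0 with hT | hT
  · have he : {s | s ∈ Icc (0:ℝ) T ∧ F s + Lfun a b F s - Ufun a b F s ≠ b} = ∅ := by
      ext s
      simp only [mem_setOf_eq, mem_empty_iff_false, iff_false, not_and]
      intro h1
      exact absurd (le_trans h1.1 h1.2) (not_le.2 hT)
    rw [he]; exact measure_empty
  set N := idx a b F T with hN
  set E := {s | s ∈ Icc (0:ℝ) T ∧ F s + Lfun a b F s - Ufun a b F s ≠ b} with hE
  have hEsub : E ⊆ ⋃ k ∈ Finset.range (N+1), (E ∩ Jw a b F T k) := by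
    intro s hs
    obtain ⟨k, hk, hkJ⟩ := Jw_cover hF hab hT hs.1
    exact mem_biUnion (Finset.mem_range.2 (by omega)) ⟨hs, hkJ⟩
  refine measure_mono_null hEsub ?_
  refine le_antisymm (le_trans (measure_biUnion_finset_le _ _) ?_) zero_le
  rw [Finset.sum_eq_zero]
  intro k hk
  rw [Finset.mem_range] at hk
  have hkN : k ≤ N := by omega
  by_cases hev : Even k
  · -- inactive phase for U : constant
    have hconst : ∀ s ∈ Jw a b F T k, Ufun a b F s = uv a b F k := by
      intro s hs
      rw [(on_Jw hF hab hT hkN hs).2, phiU, if_pos hev]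
    refine measure_mono_null inter_subset_right ?_
    have hJI : Jw a b F T k = Icc (tau a b F k) (endk a b F T k) := rfl
    rw [hJI, lsMeasure_Icc _ hm hc,
      hconst _ (right_mem_Icc.2 (Jw_nonempty hF hab hT hkN)),
      hconst _ (left_mem_Icc.2 (Jw_nonempty hF hab hT hkN))]
    simp
  · -- active phase for U
    set V := {s : ℝ | Vph a b F k s ≠ cph a b k} with hV
    have hVopen : IsOpen (Ioo (tau a b F k) (endk a b F T k) ∩ V) := by
      refine isOpen_Ioo.inter ?_
      have : V = {s : ℝ | Vph a b F k s = cph a b k}ᶜ := rfl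
      rw [this]
      exact (isClosed_eq (Vph_cont hF k) continuous_const).isOpen_compl
    have hsub2 : E ∩ Jw a b F T k ⊆
        (Ioo (tau a b F k) (endk a b F T k) ∩ V) ∪ {tau a b F k} ∪ {endk a b F T k} := by
      intro s hs
      have hVs : s ∈ V := by
        have h1 := (on_Jw hF hab hT hkN hs.2).1
        have h2 := (on_Jw hF hab hT hkN hs.2).2
        have hz := phiZ_eq (a := a) (b := b) (F := F) k s
        rw [if_neg hev] at hz
        intro hVc
        apply hs.1.2
        rw [h1, h2, hz, hVc, cph, if_neg hev, neg_neg]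
      rcases eq_or_lt_of_le hs.2.1 with h1 | h1
      · exact Or.inl (Or.inr (mem_singleton_iff.2 h1.symm))
      rcases eq_or_lt_of_le hs.2.2 with h2 | h2
      · exact Or.inr (mem_singleton_iff.2 h2)
      · exact Or.inl (Or.inl ⟨⟨h1, h2⟩, hVs⟩)
    refine measure_mono_null hsub2 ?_
    refine measure_union_null (measure_union_null ?_ (lsMeasure_singleton _ _ _ _))
      (lsMeasure_singleton _ _ _ _)
    refine null_on_open _ hm hc _ hVopen ?_
    intro u v huv hIcc
    have huO := hIcc (left_mem_Icc.2 huv)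
    have hvO := hIcc (right_mem_Icc.2 huv)
    have hJu : u ∈ Jw a b F T k := Ioo_subset_Icc_self huO.1
    have hJv : v ∈ Jw a b F T k := Ioo_subset_Icc_self hvO.1
    rw [(on_Jw hF hab hT hkN hJu).2, (on_Jw hF hab hT hkN hJv).2, phiU, phiU,
      if_neg hev, if_neg hev]
    congr 1
    refine SL_const_of (gph_cont hF k) (le_of_lt huO.1.1) huv ?_
    intro r hr1 hr2 hrc
    exact (hIcc ⟨le_of_lt hr1, hr2⟩).2 hrc

end SuppSec

/-! ### Uniqueness -/

section UniqueSec
variable {a b : ℝ} {f L U L' U' : ℝ → ℝ}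

lemma Z_le_Z' (h1 : IsSkorokhodPair a b f L U) (h2 : IsSkorokhodPair a b f L' U')
    {t : ℝ} (ht : 0 ≤ t) : f t + L t - U t ≤ f t + L' t - U' t := by
  obtain ⟨hLc, hUc, hLm, hUm, hL0, hU0, hZ, hLsupp, hUsupp⟩ := h1
  obtain ⟨hLc', hUc', hLm', hUm', hL0', hU0', hZ', hLsupp', hUsupp'⟩ := h2
  by_contra hgt
  push_neg at hgt
  set D := fun s => (L s - U s) - (L' s - U' s) with hD
  have hDc : Continuous D := (hLc.sub hUc).sub (hLc'.sub hUc')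
  have hD0 : D 0 = 0 := by rw [hD]; simp only; rw [hL0, hU0, hL0', hU0']; ring
  have hDt : 0 < D t := by rw [hD]; simp only; linarith
  set A := {s | s ∈ Icc 0 t ∧ D s ≤ 0} with hA
  have hA0 : (0:ℝ) ∈ A := ⟨⟨le_rfl, ht⟩, le_of_eq hD0⟩
  have hAcomp : IsCompact A :=
    isCompact_Icc.inter_right (isClosed_le hDc continuous_const)
  have hτ := hAcomp.sSup_mem ⟨0, hA0⟩
  set τ := sSup A with hτdef
  have hτ1 : 0 ≤ τ := hτ.1.1
  have hτ2 : τ ≤ t := hτ.1.2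
  have hτD : D τ ≤ 0 := hτ.2
  have hτt : τ < t := by
    rcases lt_or_eq_of_le hτ2 with h | h
    · exact h
    · rw [h] at hτD; linarith
  have hmid : ∀ s, τ < s → s ≤ t → 0 < D s := by
    intro s hs1 hs2
    by_contra hns
    push_neg at hns
    have hmem : s ∈ A := ⟨⟨le_trans hτ1 (le_of_lt hs1), hs2⟩, hns⟩
    linarith [le_csSup hAcomp.bddAbove hmem]
  have hLconst : L t = L τ := by
    have hnull := hLsupp hLm hLc t
    have hsub : Ioc τ t ⊆ {s | s ∈ Icc 0 t ∧ f s + L s - U s ≠ a} := by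
      intro s hs
      have hs0 : (0:ℝ) ≤ s := le_trans hτ1 (le_of_lt hs.1)
      refine ⟨⟨hs0, hs.2⟩, ?_⟩
      have hDs := hmid s hs.1 hs.2
      have hZ'a := (hZ' s hs0).1
      have hDs' : (L s - U s) - (L' s - U' s) = D s := rfl
      intro hZa
      linarith [hZ'a]
    have h0 : lsMeasure L hLm hLc (Ioc τ t) = 0 := measure_mono_null hsub hnull
    rw [lsMeasure_Ioc] at h0
    have h1 := ENNReal.ofReal_eq_zero.1 h0
    have h2 := hLm hτ2
    linarith
  have hU'const : U' t = U' τ := by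
    have hnull := hUsupp' hUm' hUc' t
    have hsub : Ioc τ t ⊆ {s | s ∈ Icc 0 t ∧ f s + L' s - U' s ≠ b} := by
      intro s hs
      have hs0 : (0:ℝ) ≤ s := le_trans hτ1 (le_of_lt hs.1)
      refine ⟨⟨hs0, hs.2⟩, ?_⟩
      have hDs := hmid s hs.1 hs.2
      have hZb := (hZ s hs0).2
      have hDs' : (L s - U s) - (L' s - U' s) = D s := rfl
      intro hZb'
      linarith
    have h0 : lsMeasure U' hUm' hUc' (Ioc τ t) = 0 := measure_mono_null hsub hnull
    rw [lsMeasure_Ioc] at h0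
    have h1 := ENNReal.ofReal_eq_zero.1 h0
    have h2 := hUm' hτ2
    linarith
  have hDτ' : (L τ - U τ) - (L' τ - U' τ) = D τ := rfl
  have hDt' : (L t - U t) - (L' t - U' t) = D t := rfl
  have hU2 := hUm hτ2
  have hL'2 := hLm' hτ2
  linarith

lemma lsMeasure_inter_Icc (W : ℝ → ℝ) (hm : Monotone W) (hc : Continuous W) (u v t : ℝ) :
    lsMeasure W hm hc (Ioc u v ∩ Icc 0 t) =
      ENNReal.ofReal (W (min v t) - W (max u 0)) := by
  set u' := max u 0 with hu'
  set v' := min v t with hv'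
  have hY : Ioc u' v' ⊆ Ioc u v ∩ Icc 0 t := by
    intro s hs
    exact ⟨⟨lt_of_le_of_lt (le_max_left u 0) hs.1, le_trans hs.2 (min_le_left v t)⟩,
      ⟨le_of_lt (lt_of_le_of_lt (le_max_right u 0) hs.1), le_trans hs.2 (min_le_right v t)⟩⟩
  have hX : Ioc u v ∩ Icc 0 t ⊆ Ioc u' v' ∪ {0} := by
    intro s hs
    rcases le_or_gt s u' with h | h
    · right
      have h1 : u < s := hs.1.1
      have h2 : 0 ≤ s := hs.2.1
      have : s = 0 := by
        rcases le_or_gt u 0 with hu | hu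
        · rw [hu', max_eq_right hu] at h; linarith
        · rw [hu', max_eq_left (le_of_lt hu)] at h; linarith
      exact this
    · exact Or.inl ⟨h, le_min hs.1.2 hs.2.2⟩
  refine le_antisymm ?_ ?_
  · calc lsMeasure W hm hc (Ioc u v ∩ Icc 0 t)
        ≤ lsMeasure W hm hc (Ioc u' v' ∪ {0}) := measure_mono hX
      _ ≤ lsMeasure W hm hc (Ioc u' v') + lsMeasure W hm hc {0} := measure_union_le _ _
      _ = ENNReal.ofReal (W v' - W u') := by
          rw [lsMeasure_singleton, add_zero, lsMeasure_Ioc]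
  · rw [← lsMeasure_Ioc W hm hc u' v']
    exact measure_mono hY

lemma pair_unique (hab : a < b) (hf : ContinuousOn f (Ici 0))
    (h1 : IsSkorokhodPair a b f L U) (h2 : IsSkorokhodPair a b f L' U')
    {t : ℝ} (ht : 0 ≤ t) : L t = L' t ∧ U t = U' t := by
  have hZeq : ∀ s, 0 ≤ s → L s - U s = L' s - U' s := by
    intro s hs
    have e1 := Z_le_Z' h1 h2 hs
    have e2 := Z_le_Z' h2 h1 hs
    linarith
  obtain ⟨hLc, hUc, hLm, hUm, hL0, hU0, hZ, hLsupp, hUsupp⟩ := h1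
  obtain ⟨hLc', hUc', hLm', hUm', hL0', hU0', hZ', hLsupp', hUsupp'⟩ := h2
  have hfc : Continuous fun s : ℝ => f (max s 0) :=
    hf.comp_continuous (continuous_id.max continuous_const) fun x => le_max_right x 0
  set G : ℝ → ℝ := fun s => f (max s 0) + L s - U s with hG
  have hGc : Continuous G := (hfc.add hLc).sub hUc
  have hGeq : ∀ s, 0 ≤ s → G s = f s + L s - U s := by
    intro s hs
    rw [hG]
    simp only
    rw [max_eq_left hs]
  set A := Icc 0 t ∩ G ⁻¹' {a} with hA
  have hAmeas : MeasurableSet A :=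
    (isClosed_Icc.inter (isClosed_singleton.preimage hGc)).measurableSet
  have hAIcc : A ⊆ Icc 0 t := inter_subset_left
  -- the four null facts
  have hLnull : lsMeasure L hLm hLc (Icc 0 t \ A) = 0 := by
    refine measure_mono_null ?_ (hLsupp hLm hLc t)
    intro s hs
    refine ⟨hs.1, ?_⟩
    intro hcon
    exact hs.2 ⟨hs.1, by rw [mem_preimage, mem_singleton_iff, hGeq s hs.1.1]; exact hcon⟩
  have hL'null : lsMeasure L' hLm' hLc' (Icc 0 t \ A) = 0 := by
    refine measure_mono_null ?_ (hLsupp' hLm' hLc' t)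
    intro s hs
    refine ⟨hs.1, ?_⟩
    intro hcon
    refine hs.2 ⟨hs.1, ?_⟩
    rw [mem_preimage, mem_singleton_iff, hGeq s hs.1.1]
    have := hZeq s hs.1.1
    linarith
  have hUA : lsMeasure U hUm hUc A = 0 := by
    refine measure_mono_null ?_ (hUsupp hUm hUc t)
    intro s hs
    refine ⟨hs.1, ?_⟩
    have hGa : G s = a := hs.2
    rw [← hGeq s hs.1.1, hGa]
    exact ne_of_lt hab
  have hU'A : lsMeasure U' hUm' hUc' A = 0 := by
    refine measure_mono_null ?_ (hUsupp' hUm' hUc' t)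
    intro s hs
    refine ⟨hs.1, ?_⟩
    have hGa : G s = a := hs.2
    have := hZeq s hs.1.1
    have h2 : f s + L' s - U' s = f s + L s - U s := by linarith
    rw [h2, ← hGeq s hs.1.1, hGa]
    exact ne_of_lt hab
  -- measure extension
  haveI hloc1 : IsLocallyFiniteMeasure (lsMeasure L hLm hLc) := by
    rw [lsMeasure]; infer_instance
  haveI hloc2 : IsLocallyFiniteMeasure (lsMeasure U' hUm' hUc') := by
    rw [lsMeasure]; infer_instance
  haveI hloc3 : IsLocallyFiniteMeasure (lsMeasure L hLm hLc + lsMeasure U' hUm' hUc') :=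
    add_locallyFinite _ _
  haveI hloc4 : IsLocallyFiniteMeasure
      ((lsMeasure L hLm hLc + lsMeasure U' hUm' hUc').restrict (Icc 0 t)) :=
    Measure.isLocallyFiniteMeasure_of_le Measure.restrict_le_self
  have hext : (lsMeasure L hLm hLc + lsMeasure U' hUm' hUc').restrict (Icc 0 t) =
      (lsMeasure L' hLm' hLc' + lsMeasure U hUm hUc).restrict (Icc 0 t) := by
    refine Measure.ext_of_Ioc _ _ ?_
    intro u v huv
    rw [Measure.restrict_apply measurableSet_Ioc, Measure.restrict_apply measurableSet_Ioc]
    rw [Measure.add_apply, Measure.add_apply]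
    rw [lsMeasure_inter_Icc, lsMeasure_inter_Icc, lsMeasure_inter_Icc, lsMeasure_inter_Icc]
    set u' := max u 0
    set v' := min v t
    rcases le_or_gt u' v' with hcase | hcase
    · have hu0 : (0:ℝ) ≤ u' := le_max_right u 0
      have hv0 : (0:ℝ) ≤ v' := le_trans hu0 hcase
      rw [← ENNReal.ofReal_add (by linarith [hLm hcase] : (0:ℝ) ≤ L v' - L u')
          (by linarith [hUm' hcase] : (0:ℝ) ≤ U' v' - U' u'),
        ← ENNReal.ofReal_add (by linarith [hLm' hcase] : (0:ℝ) ≤ L' v' - L' u')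
          (by linarith [hUm hcase] : (0:ℝ) ≤ U v' - U u')]
      congr 1
      have e1 := hZeq u' hu0
      have e2 := hZeq v' hv0
      linarith
    · rw [ENNReal.ofReal_of_nonpos (by linarith [hLm (le_of_lt hcase)]),
        ENNReal.ofReal_of_nonpos (by linarith [hUm' (le_of_lt hcase)]),
        ENNReal.ofReal_of_nonpos (by linarith [hLm' (le_of_lt hcase)]),
        ENNReal.ofReal_of_nonpos (by linarith [hUm (le_of_lt hcase)])]
  -- evaluate at A
  have hres1 : (lsMeasure L hLm hLc + lsMeasure U' hUm' hUc').restrict (Icc 0 t) A =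
      lsMeasure L hLm hLc A + lsMeasure U' hUm' hUc' A := by
    rw [Measure.restrict_apply hAmeas, inter_eq_left.2 hAIcc, Measure.add_apply]
  have hres2 : (lsMeasure L' hLm' hLc' + lsMeasure U hUm hUc).restrict (Icc 0 t) A =
      lsMeasure L' hLm' hLc' A + lsMeasure U hUm hUc A := by
    rw [Measure.restrict_apply hAmeas, inter_eq_left.2 hAIcc, Measure.add_apply]
  have hμA : lsMeasure L hLm hLc A = lsMeasure L' hLm' hLc' A := by
    have := congrArg (fun μ : Measure ℝ => μ A) hext
    rw [hres1, hres2, hUA, hU'A, add_zero, add_zero] at this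
    exact this
  -- measure of A equals measure of Icc
  have hIccA : ∀ (W : ℝ → ℝ) (hm : Monotone W) (hc : Continuous W),
      lsMeasure W hm hc (Icc 0 t \ A) = 0 →
      lsMeasure W hm hc (Icc 0 t) = lsMeasure W hm hc A := by
    intro W hm hc hnull
    refine le_antisymm ?_ (measure_mono hAIcc)
    calc lsMeasure W hm hc (Icc 0 t) ≤ lsMeasure W hm hc (A ∪ (Icc 0 t \ A)) := by
          refine measure_mono fun s hs => ?_
          by_cases h : s ∈ A
          · exact Or.inl h
          · exact Or.inr ⟨hs, h⟩
      _ ≤ lsMeasure W hm hc A + lsMeasure W hm hc (Icc 0 t \ A) := measure_union_le _ _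
      _ = lsMeasure W hm hc A := by rw [hnull, add_zero]
  have hfinal : ENNReal.ofReal (L t - L 0) = ENNReal.ofReal (L' t - L' 0) := by
    rw [← lsMeasure_Icc L hLm hLc 0 t, ← lsMeasure_Icc L' hLm' hLc' 0 t,
      hIccA L hLm hLc hLnull, hIccA L' hLm' hLc' hL'null, hμA]
  rw [hL0, hL0', sub_zero, sub_zero] at hfinal
  have hLt : L t = L' t := by
    have h1 : (0:ℝ) ≤ L t := by have := hLm ht; rwa [hL0] at this
    have h2 : (0:ℝ) ≤ L' t := by have := hLm' ht; rwa [hL0'] at this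
    exact (ENNReal.ofReal_eq_ofReal_iff h1 h2).1 hfinal
  refine ⟨hLt, ?_⟩
  have := hZeq t ht
  linarith

end UniqueSec
end SkorokhodProof

open SkorokhodProof

/-- existence and uniqueness (on `[0, ∞)`) of the solution to the
two-sided Skorokhod reflection problem on `[a, b]` for a continuous driving path
`f` with `a ≤ f(0) ≤ b`. -/
theorem stmt11 (a b : ℝ) (hab : a < b) (f : ℝ → ℝ)
    (hf : ContinuousOn f (Set.Ici 0)) (hf0a : a ≤ f 0) (hf0b : f 0 ≤ b) :
    ∃ L U : ℝ → ℝ, IsSkorokhodPair a b f L U ∧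
      ∀ L' U' : ℝ → ℝ, IsSkorokhodPair a b f L' U' →
        ∀ t, 0 ≤ t → L' t = L t ∧ U' t = U t := by
  set F : ℝ → ℝ := fun t => f (max t 0) with hFdef
  have hFc : Continuous F :=
    hf.comp_continuous (continuous_id.max continuous_const) fun x => le_max_right x 0
  have hF0 : F 0 = f 0 := by rw [hFdef]; simp
  have hF0a : a ≤ F 0 := by rw [hF0]; exact hf0a
  have hF0b : F 0 ≤ b := by rw [hF0]; exact hf0b
  have hfeq : ∀ s : ℝ, 0 ≤ s → f s = F s := by
    intro s hs
    rw [hFdef]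
    simp [max_eq_left hs]
  have hmain : IsSkorokhodPair a b f (Lfun a b F) (Ufun a b F) := by
    refine ⟨Lfun_cont hFc hab, Ufun_cont hFc hab, Lfun_mono hFc hab, Ufun_mono hFc hab,
      Lfun_zero hFc hab hF0a, Ufun_zero hFc hab hF0a hF0b, ?_, ?_, ?_⟩
    · intro t ht
      have h := Z_mem hFc hab hF0a hF0b ht
      rw [Set.mem_Icc, hfeq t ht]
      exact h
    · intro hm hc T
      have hset : {s | s ∈ Set.Icc 0 T ∧ f s + Lfun a b F s - Ufun a b F s ≠ a} =
          {s | s ∈ Set.Icc 0 T ∧ F s + Lfun a b F s - Ufun a b F s ≠ a} := by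
        ext s
        simp only [Set.mem_setOf_eq, and_congr_right_iff]
        intro hs
        rw [hfeq s hs.1]
      rw [hset]
      exact Lsupp hFc hab hF0a hF0b hm hc T
    · intro hm hc T
      have hset : {s | s ∈ Set.Icc 0 T ∧ f s + Lfun a b F s - Ufun a b F s ≠ b} =
          {s | s ∈ Set.Icc 0 T ∧ F s + Lfun a b F s - Ufun a b F s ≠ b} := by
        ext s
        simp only [Set.mem_setOf_eq, and_congr_right_iff]
        intro hs
        rw [hfeq s hs.1]
      rw [hset]
      exact Usupp hFc hab hF0a hF0b hm hc T
  exact ⟨Lfun a b F, Ufun a b F, hmain, fun L' U' hpair t ht =>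
    pair_unique hab hf hpair hmain ht⟩
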